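/- For the complete bipartite graph K_{m,n} with m + n > 7, there is no distribution R such that M̂_R = (1/(m+n))J; equivalently, the multiplicity bound 1 + 1 + (m+n−2)² ≤ (m+n)(m+n+1)/2 fails for m+n ≥ 8. -/

import Mathlib

open Matrix MeasureTheory
open scoped Matrix

/-- The average mixing matrix under a sampling distribution `μ`, expressed via the
(real) spectral idempotents `E r` with eigenvalues `θ r`. -/
noncomputable def ammR {V : Type*} [Fintype V] {d : ℕ} (θ : Fin d → ℝ)
    (E : Fin d → Matrix V V ℝ) (μ : Measure ℝ) : Matrix V V ℝ :=
  (∑ r, E r ⊙ E r) +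
    ∑ r, ∑ s ∈ Finset.univ.filter (· < r),
      (2 * ∫ t, Real.cos ((θ r - θ s) * t) ∂μ) • (E r ⊙ E s)

noncomputable def Bmat (m n : ℕ) : Matrix (Fin m ⊕ Fin n) (Fin m ⊕ Fin n) ℝ :=
  Matrix.of fun x y =>
    match x, y with
    | Sum.inl _, Sum.inl _ => (n : ℝ)
    | Sum.inr _, Sum.inr _ => (m : ℝ)
    | _, _ => 0

lemma aux_if_pair {ι : Type*} [LinearOrder ι] {β : Type*} [AddCommMonoid β]
    {x y : ι} (h : x ≠ y) (M : β) :
    (if y < x then M else 0) + (if x < y then M else 0) = M := by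
  rcases lt_or_gt_of_ne h with h' | h'
  · rw [if_neg (not_lt_of_gt h'), if_pos h', zero_add]
  · rw [if_pos h', if_neg (not_lt_of_gt h'), add_zero]

lemma aux_sum_pairs {ι : Type*} [LinearOrder ι] [Fintype ι] {β : Type*} [AddCommGroup β]
    (F : ι → ι → β) (a b c : ι) (hab : a ≠ b) (hac : a ≠ c) (hbc : b ≠ c)
    (hsymm : ∀ r s, F r s = F s r)
    (hz : ∀ r s, r ∉ ({a, b, c} : Finset ι) ∨ s ∉ ({a, b, c} : Finset ι) → F r s = 0) :
    (∑ r, ∑ s ∈ Finset.univ.filter (· < r), F r s) = F a b + F a c + F b c := by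
  have hbc' : b ∉ ({c} : Finset ι) := by simp [hbc]
  have hab' : a ∉ ({b, c} : Finset ι) := by simp [hab, hac]
  have inner : ∀ r : ι, (∑ s ∈ Finset.univ.filter (· < r), F r s)
      = ∑ s ∈ ({a, b, c} : Finset ι), (if s < r then F r s else 0) := by
    intro r
    rw [Finset.sum_filter]
    refine (Finset.sum_subset (Finset.subset_univ _) fun s _ hs => ?_).symm
    rw [hz r s (Or.inr hs), ite_self]
  have step1 : (∑ r, ∑ s ∈ Finset.univ.filter (· < r), F r s)
      = ∑ r ∈ ({a, b, c} : Finset ι), ∑ s ∈ ({a, b, c} : Finset ι),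
          (if s < r then F r s else 0) := by
    rw [show (∑ r, ∑ s ∈ Finset.univ.filter (· < r), F r s)
        = ∑ r, ∑ s ∈ ({a, b, c} : Finset ι), (if s < r then F r s else 0) from
      Finset.sum_congr rfl fun r _ => inner r]
    refine (Finset.sum_subset (Finset.subset_univ _) fun r _ hr => ?_).symm
    refine Finset.sum_eq_zero fun s _ => ?_
    rw [hz r s (Or.inl hr), ite_self]
  rw [step1]
  simp only [Finset.sum_insert hab', Finset.sum_insert hbc', Finset.sum_singleton]
  rw [if_neg (lt_irrefl a), if_neg (lt_irrefl b), if_neg (lt_irrefl c)]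
  rw [show F b a = F a b from hsymm b a, show F c a = F a c from hsymm c a,
    show F c b = F b c from hsymm c b]
  conv_rhs => rw [← aux_if_pair hab (F a b), ← aux_if_pair hac (F a c),
    ← aux_if_pair hbc (F b c)]
  abel

lemma aux_cos_int {μ : MeasureTheory.Measure ℝ} [IsProbabilityMeasure μ] (c : ℝ) :
    (-2 : ℝ) ≤ 2 * ∫ t, Real.cos (c * t) ∂μ := by
  have hcont : Continuous fun t : ℝ => Real.cos (c * t) :=
    Real.continuous_cos.comp (continuous_const.mul continuous_id)
  have hint : Integrable (fun t => Real.cos (c * t)) μ := by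
    refine (integrable_const (1 : ℝ)).mono' hcont.aestronglyMeasurable ?_
    filter_upwards with t
    rw [Real.norm_eq_abs]
    exact Real.abs_cos_le_one _
  have h1 : ∫ _t, (-1 : ℝ) ∂μ ≤ ∫ t, Real.cos (c * t) ∂μ :=
    integral_mono (integrable_const _) hint fun t => Real.neg_one_le_cos _
  rw [integral_const] at h1
  simp at h1
  linarith

theorem aux_main {m n : ℕ} (hm : 0 < m) (hn : 0 < n) (h : 7 < m + n)
    {d : ℕ} (θ : Fin d → ℝ) (E : Fin d → Matrix (Fin m ⊕ Fin n) (Fin m ⊕ Fin n) ℝ)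
    (μ : Measure ℝ)
    (A : Matrix (Fin m ⊕ Fin n) (Fin m ⊕ Fin n) ℝ)
    (hA1 : ∀ i j, A (Sum.inl i) (Sum.inr j) = 1)
    (hA2 : ∀ i j, A (Sum.inr j) (Sum.inl i) = 1)
    (hA3 : ∀ i i', A (Sum.inl i) (Sum.inl i') = 0)
    (hA4 : ∀ j j', A (Sum.inr j) (Sum.inr j') = 0)
    (hB : A * A = Bmat m n)
    (hAB : A * Bmat m n = ((m : ℝ) * n) • A)
    (hθinj : Function.Injective θ)
    (hA : A = (∑ r, θ r • E r))
    (horth : ∀ r s, E r * E s = if r = s then E r else 0)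
    (hsumE : (∑ r, E r) = 1)
    (hprob : IsProbabilityMeasure μ)
    (hmix : ammR θ E μ = (1 / (m + n) : ℝ) • Matrix.of fun _ _ => (1 : ℝ)) : False := by
  have hmn0 : (0 : ℝ) < (m : ℝ) * n := by positivity
  have hm0 : (m : ℝ) ≠ 0 := by positivity
  have hn0 : (n : ℝ) ≠ 0 := by positivity
  set k : ℝ := Real.sqrt ((m : ℝ) * n) with hkdef
  have hk2 : k * k = (m : ℝ) * n := Real.mul_self_sqrt (le_of_lt hmn0)
  have hkpos : 0 < k := Real.sqrt_pos.2 hmn0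
  have hAE : ∀ r, A * E r = θ r • E r := by
    intro r
    rw [hA, Finset.sum_mul, Finset.sum_eq_single r]
    · rw [Matrix.smul_mul, horth, if_pos rfl]
    · intro s _ hs; rw [Matrix.smul_mul, horth, if_neg hs, smul_zero]
    · intro hr; exact absurd (Finset.mem_univ r) hr
  have hBE : ∀ r, Bmat m n * E r = (θ r * θ r) • E r := by
    intro r; rw [← hB, Matrix.mul_assoc, hAE, Matrix.mul_smul, hAE, smul_smul]
  have hcube : ∀ r, (θ r * θ r * θ r) • E r = ((m : ℝ) * n * θ r) • E r := by
    intro r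
    have h1 : A * (Bmat m n * E r) = (θ r * θ r * θ r) • E r := by
      rw [hBE, Matrix.mul_smul, hAE, smul_smul]
    have h2 : A * (Bmat m n * E r) = ((m : ℝ) * n * θ r) • E r := by
      rw [← Matrix.mul_assoc, hAB, Matrix.smul_mul, hAE, smul_smul]
    rw [← h1, h2]
  have hθ3 : ∀ r, E r ≠ 0 → θ r = 0 ∨ θ r = k ∨ θ r = -k := by
    intro r hr
    have h0 : (θ r * θ r * θ r - (m : ℝ) * n * θ r) • E r = 0 := by
      rw [sub_smul, hcube r, sub_self]
    rcases smul_eq_zero.mp h0 with hc | hE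
    · have hfac : θ r * (θ r - k) * (θ r + k) = 0 := by linear_combination hc - θ r * hk2
      rcases mul_eq_zero.mp hfac with hf | hf
      · rcases mul_eq_zero.mp hf with hf' | hf'
        · exact Or.inl hf'
        · exact Or.inr (Or.inl (by linarith [sub_eq_zero.mp hf']))
      · exact Or.inr (Or.inr (by linarith [eq_neg_of_add_eq_zero_left hf]))
    · exact absurd hE hr
  have hmain : ∀ ε : ℝ, ε * ε = (m : ℝ) * n → ε ≠ 0 →
      ∃ r, θ r = ε ∧ E r = ((2 * ((m : ℝ) * n))⁻¹) • (Bmat m n + ε • A) := by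
    intro ε hε2 hε0
    have hεk : ε = k ∨ ε = -k := by
      have hfac : (ε - k) * (ε + k) = 0 := by linear_combination hε2 - hk2
      rcases mul_eq_zero.mp hfac with hf | hf
      · exact Or.inl (by linarith [sub_eq_zero.mp hf])
      · exact Or.inr (by linarith [eq_neg_of_add_eq_zero_left hf])
    have hPE : ∀ r, ((2 * ((m : ℝ) * n))⁻¹ • (Bmat m n + ε • A)) * E r
        = ((2 * ((m : ℝ) * n))⁻¹ * (θ r * θ r + ε * θ r)) • E r := by
      intro r
      rw [Matrix.smul_mul, Matrix.add_mul, hBE, Matrix.smul_mul, hAE, smul_smul,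
        ← add_smul, ← smul_smul]
    have hcoefzero : ∀ r, θ r ≠ ε →
        ((2 * ((m : ℝ) * n))⁻¹ * (θ r * θ r + ε * θ r)) • E r = 0 := by
      intro r hne
      by_cases hr : E r = 0
      · rw [hr, smul_zero]
      · have hc0 : θ r * θ r + ε * θ r = 0 := by
          rcases hθ3 r hr with h' | h' | h'
          · rw [h']; ring
          · rcases hεk with he | he
            · exact absurd (h'.trans he.symm) hne
            · rw [h', he]; ring
          · rcases hεk with he | he
            · rw [h', he]; ring
            · exact absurd (h'.trans he.symm) hne
        rw [hc0, mul_zero, zero_smul]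
    have hPsum : ((2 * ((m : ℝ) * n))⁻¹ • (Bmat m n + ε • A))
        = ∑ r, ((2 * ((m : ℝ) * n))⁻¹ * (θ r * θ r + ε * θ r)) • E r := by
      calc ((2 * ((m : ℝ) * n))⁻¹ • (Bmat m n + ε • A))
          = ((2 * ((m : ℝ) * n))⁻¹ • (Bmat m n + ε • A)) * (∑ r, E r) := by
            rw [hsumE, Matrix.mul_one]
        _ = ∑ r, ((2 * ((m : ℝ) * n))⁻¹ • (Bmat m n + ε • A)) * E r := Finset.mul_sum _ _ _
        _ = _ := Finset.sum_congr rfl fun r _ => hPE r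
    by_cases hex : ∃ r, θ r = ε
    · obtain ⟨r, hr⟩ := hex
      refine ⟨r, hr, ?_⟩
      have hP : ((2 * ((m : ℝ) * n))⁻¹ • (Bmat m n + ε • A)) = E r := by
        rw [hPsum, Finset.sum_eq_single r]
        · have hone : (2 * ((m : ℝ) * n))⁻¹ * (θ r * θ r + ε * θ r) = 1 := by
            rw [hr]
            field_simp
            linarith [hε2]
          rw [hone, one_smul]
        · intro s _ hs
          exact hcoefzero s (fun hc => hs (hθinj (hc.trans hr.symm)))
        · intro hr'; exact absurd (Finset.mem_univ r) hr'
      exact hP.symm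
    · exfalso
      push_neg at hex
      have hP0 : ((2 * ((m : ℝ) * n))⁻¹ • (Bmat m n + ε • A)) = 0 := by
        rw [hPsum]; exact Finset.sum_eq_zero fun r _ => hcoefzero r (hex r)
      have h2 : ((2 * ((m : ℝ) * n))⁻¹ • (Bmat m n + ε • A)) (Sum.inl ⟨0, hm⟩)
          (Sum.inr ⟨0, hn⟩) = 0 := by rw [hP0]; simp
      rw [Matrix.smul_apply, Matrix.add_apply, Matrix.smul_apply, hA1] at h2
      simp only [Bmat, Matrix.of_apply, zero_add, smul_eq_mul, mul_one] at h2
      rcases mul_eq_zero.mp h2 with h' | h'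
      · exact absurd h' (inv_ne_zero (by positivity))
      · exact hε0 h'
  -- the three special projections
  obtain ⟨rp, hθp, hEp⟩ := hmain k hk2 (ne_of_gt hkpos)
  obtain ⟨rq, hθq, hEq⟩ := hmain (-k) (by rw [neg_mul_neg]; exact hk2)
    (neg_ne_zero.mpr (ne_of_gt hkpos))
  have hpq : rp ≠ rq := by
    intro hcon; rw [hcon, hθq] at hθp; linarith
  have hr0ex : ∃ r0, r0 ≠ rp ∧ r0 ≠ rq ∧ E r0 ≠ 0 := by
    by_contra hcon
    push_neg at hcon
    have hone : (1 : Matrix (Fin m ⊕ Fin n) (Fin m ⊕ Fin n) ℝ) = E rp + E rq := by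
      rw [← hsumE, ← Finset.sum_pair hpq]
      refine (Finset.sum_subset (Finset.subset_univ _) fun x _ hx => ?_).symm
      simp only [Finset.mem_insert, Finset.mem_singleton, not_or] at hx
      exact hcon x hx.1 hx.2
    have hL := congrArg (fun M => M (Sum.inl ⟨0, hm⟩) (Sum.inl ⟨0, hm⟩)) hone
    have hR := congrArg (fun M => M (Sum.inr ⟨0, hn⟩) (Sum.inr ⟨0, hn⟩)) hone
    simp only [Matrix.one_apply_eq, Matrix.add_apply, hEp, hEq, Matrix.smul_apply,
      Matrix.add_apply, Matrix.smul_apply, hA3, hA4, Bmat, Matrix.of_apply, smul_eq_mul,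
      mul_zero, add_zero] at hL hR
    -- hL : 1 = (2mn)⁻¹ * n + (2mn)⁻¹ * n, hR : 1 = (2mn)⁻¹ * m + (2mn)⁻¹ * m
    have hm1 : (m : ℝ) = 1 := by
      field_simp at hL
      have h2 : (2 * (m : ℝ)) * n = 2 * n := by linear_combination (n : ℝ) * hL
      have := mul_right_cancel₀ hn0 h2
      linarith
    have hn1 : (n : ℝ) = 1 := by
      field_simp at hR
      have h2 : (2 * (n : ℝ)) * m = 2 * m := by linear_combination (m : ℝ) * hR
      have := mul_right_cancel₀ hm0 h2
      linarith
    have : (7 : ℝ) < (m : ℝ) + n := by exact_mod_cast h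
    linarith
  obtain ⟨r0, hr0p, hr0q, hE0ne⟩ := hr0ex
  have hθ0 : θ r0 = 0 := by
    rcases hθ3 r0 hE0ne with h' | h' | h'
    · exact h'
    · exact absurd (hθinj (h'.trans hθp.symm)) hr0p
    · exact absurd (hθinj (h'.trans hθq.symm)) hr0q
  have hsupport : ∀ r, r ≠ rp → r ≠ rq → r ≠ r0 → E r = 0 := by
    intro r h1 h2 h3
    by_contra hne
    rcases hθ3 r hne with h' | h' | h'
    · exact h3 (hθinj (h'.trans hθ0.symm))
    · exact h1 (hθinj (h'.trans hθp.symm))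
    · exact h2 (hθinj (h'.trans hθq.symm))
  have hnotin1 : rp ∉ ({rq, r0} : Finset (Fin d)) := by
    simp [hpq, Ne.symm hr0p]
  have hnotin2 : rq ∉ ({r0} : Finset (Fin d)) := by
    simp [Ne.symm hr0q]
  have hE0 : E r0 = 1 - E rp - E rq := by
    have h3 : (∑ r, E r) = E rp + E rq + E r0 := by
      rw [← Finset.sum_subset (Finset.subset_univ ({rp, rq, r0} : Finset (Fin d)))
        (fun x _ hx => by
          simp only [Finset.mem_insert, Finset.mem_singleton, not_or] at hx
          exact hsupport x hx.1 hx.2.1 hx.2.2)]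
      rw [Finset.sum_insert hnotin1, Finset.sum_insert hnotin2, Finset.sum_singleton]
      abel
    rw [hsumE] at h3
    rw [h3]; abel
  -- reduce the average mixing matrix
  have hsq : (∑ r, E r ⊙ E r) = E rp ⊙ E rp + E rq ⊙ E rq + E r0 ⊙ E r0 := by
    rw [← Finset.sum_subset (Finset.subset_univ ({rp, rq, r0} : Finset (Fin d)))
      (fun x _ hx => by
        simp only [Finset.mem_insert, Finset.mem_singleton, not_or] at hx
        rw [hsupport x hx.1 hx.2.1 hx.2.2, Matrix.hadamard_zero])]
    rw [Finset.sum_insert hnotin1, Finset.sum_insert hnotin2, Finset.sum_singleton]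
    abel
  have hcross : (∑ r, ∑ s ∈ Finset.univ.filter (· < r),
      (2 * ∫ t, Real.cos ((θ r - θ s) * t) ∂μ) • (E r ⊙ E s))
      = (2 * ∫ t, Real.cos ((θ rp - θ rq) * t) ∂μ) • (E rp ⊙ E rq)
        + (2 * ∫ t, Real.cos ((θ rp - θ r0) * t) ∂μ) • (E rp ⊙ E r0)
        + (2 * ∫ t, Real.cos ((θ rq - θ r0) * t) ∂μ) • (E rq ⊙ E r0) := by
    refine aux_sum_pairs _ rp rq r0 hpq (Ne.symm hr0p) (Ne.symm hr0q) ?_ ?_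
    · intro r s
      have hi : (∫ t, Real.cos ((θ r - θ s) * t) ∂μ)
          = ∫ t, Real.cos ((θ s - θ r) * t) ∂μ := by
        rw [show (fun t => Real.cos ((θ r - θ s) * t))
            = fun t => Real.cos ((θ s - θ r) * t) from funext fun t => by
          rw [show (θ r - θ s) * t = -((θ s - θ r) * t) by ring, Real.cos_neg]]
      rw [hi, Matrix.hadamard_comm]
    · intro r s hrs
      rcases hrs with hx | hx
      · simp only [Finset.mem_insert, Finset.mem_singleton, not_or] at hx
        rw [hsupport r hx.1 hx.2.1 hx.2.2, Matrix.zero_hadamard, smul_zero]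
      · simp only [Finset.mem_insert, Finset.mem_singleton, not_or] at hx
        rw [hsupport s hx.1 hx.2.1 hx.2.2, Matrix.hadamard_zero, smul_zero]
  rw [ammR, hsq, hcross] at hmix
  have hc32 : (2 * ∫ t, Real.cos ((θ rq - θ r0) * t) ∂μ)
      = 2 * ∫ t, Real.cos ((θ rp - θ r0) * t) ∂μ := by
    congr 1
    rw [show (fun t => Real.cos ((θ rq - θ r0) * t))
        = fun t => Real.cos ((θ rp - θ r0) * t) from funext fun t => by
      rw [hθq, hθp, hθ0, show (-k - 0) * t = -((k - 0) * t) by ring, Real.cos_neg]]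
  rw [hc32] at hmix
  set c1 : ℝ := 2 * ∫ t, Real.cos ((θ rp - θ rq) * t) ∂μ with hc1def
  set c2 : ℝ := 2 * ∫ t, Real.cos ((θ rp - θ r0) * t) ∂μ with hc2def
  have ha : (-2 : ℝ) ≤ c1 := aux_cos_int _
  have hb : (-2 : ℝ) ≤ c2 := aux_cos_int _
  have hLR := congrArg (fun M => M (Sum.inl ⟨0, hm⟩) (Sum.inr ⟨0, hn⟩)) hmix
  simp only [Matrix.add_apply, Matrix.smul_apply, Matrix.hadamard_apply, Matrix.sub_apply,
    Matrix.one_apply, hEp, hEq, hE0, Bmat, Matrix.of_apply, hA1, hA2, hA3, hA4,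
    smul_eq_mul, mul_zero, mul_one, add_zero, zero_add, reduceCtorEq, if_false] at hLR
  have hu : 2 * ((m : ℝ) * n) * (2 * ((m : ℝ) * n))⁻¹ = 1 := mul_inv_cancel₀ (by positivity)
  have hy : ((m : ℝ) + n) * ((m : ℝ) + n)⁻¹ = 1 := mul_inv_cancel₀ (by positivity)
  have simpset : True := trivial
  have hLRe : (2 - c1) * ((m : ℝ) + n) = 4 * ((m : ℝ) * n) := by
    have hLR := congrArg (fun M => M (Sum.inl ⟨0, hm⟩) (Sum.inr ⟨0, hn⟩)) hmix
    simp only [Matrix.add_apply, Matrix.smul_apply, Matrix.hadamard_apply, Matrix.sub_apply,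
      Matrix.one_apply, hEp, hEq, hE0, Bmat, Matrix.of_apply, hA1, hA2, hA3, hA4,
      smul_eq_mul, mul_zero, mul_one, add_zero, zero_add, reduceCtorEq, if_false,
      Sum.inl.injEq, Sum.inr.injEq, Fin.mk.injEq, if_true] at hLR
    linear_combination (4 * (m : ℝ) * n * ((m : ℝ) + n)) * hLR
      - (2 - c1) * ((m : ℝ) + n) * (1 + 2 * (m : ℝ) * n * (2 * ((m : ℝ) * n))⁻¹) * hu
      - (2 - c1) * ((m : ℝ) + n) * (4 * (m : ℝ) * n * ((2 * ((m : ℝ) * n))⁻¹)^2) * hk2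
      + (4 * (m : ℝ) * n) * hy
  have hLe : 2 ≤ m → c2 = 2 - (m : ℝ) := by
    intro hm2
    have h0 := congrArg (fun M => M (Sum.inl ⟨0, by omega⟩) (Sum.inl ⟨0, by omega⟩)) hmix
    have h1 := congrArg (fun M => M (Sum.inl ⟨0, by omega⟩) (Sum.inl ⟨1, by omega⟩)) hmix
    simp only [Matrix.add_apply, Matrix.smul_apply, Matrix.hadamard_apply, Matrix.sub_apply,
      Matrix.one_apply, hEp, hEq, hE0, Bmat, Matrix.of_apply, hA1, hA2, hA3, hA4,
      smul_eq_mul, mul_zero, mul_one, add_zero, zero_add, reduceCtorEq, if_false,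
      Sum.inl.injEq, Sum.inr.injEq, Fin.mk.injEq, if_true] at h0 h1
    linear_combination (m : ℝ) * h0 - (m : ℝ) * h1 - (c2 - 2) * hu
  have hRe : 2 ≤ n → c2 = 2 - (n : ℝ) := by
    intro hn2
    have h2 := congrArg (fun M => M (Sum.inr ⟨0, by omega⟩) (Sum.inr ⟨0, by omega⟩)) hmix
    have h3 := congrArg (fun M => M (Sum.inr ⟨0, by omega⟩) (Sum.inr ⟨1, by omega⟩)) hmix
    simp only [Matrix.add_apply, Matrix.smul_apply, Matrix.hadamard_apply, Matrix.sub_apply,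
      Matrix.one_apply, hEp, hEq, hE0, Bmat, Matrix.of_apply, hA1, hA2, hA3, hA4,
      smul_eq_mul, mul_zero, mul_one, add_zero, zero_add, reduceCtorEq, if_false,
      Sum.inl.injEq, Sum.inr.injEq, Fin.mk.injEq, if_true] at h2 h3
    linear_combination (n : ℝ) * h2 - (n : ℝ) * h3 - (c2 - 2) * hu
  have hcast8 : (8 : ℝ) ≤ (m : ℝ) + n := by
    have : 8 ≤ m + n := by omega
    exact_mod_cast this
  rcases Nat.lt_or_ge m 2 with hm2 | hm2
  · have hn7 : 7 ≤ n := by omega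
    have hn7' : (7 : ℝ) ≤ (n : ℝ) := by exact_mod_cast hn7
    have := hRe (by omega)
    linarith
  rcases Nat.lt_or_ge n 2 with hn2 | hn2
  · have hm7 : 7 ≤ m := by omega
    have hm7' : (7 : ℝ) ≤ (m : ℝ) := by exact_mod_cast hm7
    have := hLe (by omega)
    linarith
  · have e2 := hLe hm2
    have e3 := hRe hn2
    have hM4 : (m : ℝ) = 4 := by linarith
    have hN4 : (n : ℝ) = 4 := by linarith
    rw [hM4, hN4] at hLRe
    linarith

/-- for the complete bipartite graph `K_{m,n}` with `m + n > 7` vertices,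
there is no distribution `R` with `M̂_R = (1/(m+n)) J`; equivalently, the multiplicity
bound `1 + 1 + (m+n-2)² ≤ (m+n)(m+n+1)/2` fails for `m + n ≥ 8`. -/
theorem no_uniform_average_mixing_completeBipartite {m n : ℕ}
    (hm : 0 < m) (hn : 0 < n) (h : 7 < m + n)
    [DecidableRel (completeBipartiteGraph (Fin m) (Fin n)).Adj] :
    (¬ ∃ (d : ℕ) (θ : Fin d → ℝ) (E : Fin d → Matrix (Fin m ⊕ Fin n) (Fin m ⊕ Fin n) ℝ)
        (μ : Measure ℝ), Function.Injective θ ∧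
        (completeBipartiteGraph (Fin m) (Fin n)).adjMatrix ℝ = (∑ r, θ r • E r) ∧
        (∀ r, (E r).IsSymm) ∧
        (∀ r s, E r * E s = if r = s then E r else 0) ∧
        (∑ r, E r = 1) ∧
        IsProbabilityMeasure μ ∧
        ammR θ E μ = (1 / (m + n) : ℝ) • Matrix.of fun _ _ => (1 : ℝ)) ∧
    ¬ ((1 : ℝ) + 1 + ((m : ℝ) + n - 2) ^ 2 ≤ ((m : ℝ) + n) * ((m : ℝ) + n + 1) / 2) := by
  constructor
  · rintro ⟨d, θ, E, μ, hθinj, hA, hsym, horth, hsumE, hprob, hmix⟩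
    set A : Matrix (Fin m ⊕ Fin n) (Fin m ⊕ Fin n) ℝ :=
      (completeBipartiteGraph (Fin m) (Fin n)).adjMatrix ℝ with hAdef
    have hA1 : ∀ i j, A (Sum.inl i) (Sum.inr j) = 1 := by
      intro i j; simp [hAdef, SimpleGraph.adjMatrix_apply]
    have hA2 : ∀ i j, A (Sum.inr j) (Sum.inl i) = 1 := by
      intro i j; simp [hAdef, SimpleGraph.adjMatrix_apply]
    have hA3 : ∀ i i', A (Sum.inl i) (Sum.inl i') = 0 := by
      intro i i'; simp [hAdef, SimpleGraph.adjMatrix_apply]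
    have hA4 : ∀ j j', A (Sum.inr j) (Sum.inr j') = 0 := by
      intro j j'; simp [hAdef, SimpleGraph.adjMatrix_apply]
    have hB : A * A = Bmat m n := by
      ext x y
      cases x <;> cases y <;>
        simp [Matrix.mul_apply, Fintype.sum_sum_type, hA1, hA2, hA3, hA4, Bmat]
    have hAB : A * Bmat m n = ((m : ℝ) * n) • A := by
      ext x y
      cases x <;> cases y <;>
        simp [Matrix.mul_apply, Matrix.smul_apply, Fintype.sum_sum_type,
          hA1, hA2, hA3, hA4, Bmat, mul_comm]
    exact aux_main hm hn h θ E μ A hA1 hA2 hA3 hA4 hB hAB hθinj hA horth hsumE hprob hmix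
  · intro hle
    have hcast8 : (8 : ℝ) ≤ (m : ℝ) + n := by
      have : 8 ≤ m + n := by omega
      exact_mod_cast this
    nlinarith [sq_nonneg ((m : ℝ) + n - 8), sq_nonneg ((m : ℝ) + n - 2),
      mul_nonneg (by linarith : (0:ℝ) ≤ (m:ℝ) + n - 8) (by linarith : (0:ℝ) ≤ (m:ℝ) + n - 1)]
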